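/- Let (a_i), (b_i), (a'_i), (b'_i) for i = 1..n be sequences of complex numbers and A, B, ε positive reals with ε < min(1/A, 1/e), Σ_i |a_i|e^{|b_i|} ≤ B, and for all i: 2|a_i|e^{|b_i|+1} ≤ A, |b_i − b'_i| < ε, and |a_i − a'_i| < ε|a_i|. Then ‖Π_{i=1}^n Y(b_i)X(a_i)Y(−b_i) − Π_{i=1}^n Y(b'_i)X(a'_i)Y(−b'_i)‖ ≤ 12·e^{A+2B}·B·ε. -/

import Mathlib

/- STATEMENT 4 (Theorem A.1): Let (a_i), (b_i), (a'_i), (b'_i), i = 1..n, be sequences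
of complex numbers and A, B, ε > 0 with ε < min(1/A, 1/e), Σ|a_i|e^{|b_i|} ≤ B, and
for all i: 2|a_i|e^{|b_i|+1} ≤ A, |b_i − b'_i| < ε, |a_i − a'_i| < ε|a_i|.  Then
‖Π Y(b_i)X(a_i)Y(−b_i) − Π Y(b'_i)X(a'_i)Y(−b'_i)‖ ≤ 12·e^{A+2B}·B·ε, where
X(t) = exp(tX), Y(t) = exp(tY), products over increasing i, operator norm. -/

noncomputable section

/-- The (L²) operator norm of a complex 2×2 matrix. -/
def opNorm (M : Matrix (Fin 2) (Fin 2) ℂ) : ℝ :=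
  ‖Matrix.toEuclideanCLM (𝕜 := ℂ) M‖

def Xm : Matrix (Fin 2) (Fin 2) ℂ := !![1/2, 0; 0, -1/2]
def Ym : Matrix (Fin 2) (Fin 2) ℂ := !![0, 1/2; 1/2, 0]

/-- X(t) = exp(tX). -/
def Xt (t : ℂ) : Matrix (Fin 2) (Fin 2) ℂ := NormedSpace.exp (t • Xm)
/-- Y(t) = exp(tY). -/
def Yt (t : ℂ) : Matrix (Fin 2) (Fin 2) ℂ := NormedSpace.exp (t • Ym)

/-! ### Auxiliary general lemmas -/

section Aux

set_option linter.unusedSectionVars false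

open NormedSpace

lemma my_norm_pow_sub_pow {𝔸 : Type*} [NormedRing 𝔸] {x y : 𝔸} {M : ℝ}
    (hx : ‖x‖ ≤ M) (hy : ‖y‖ ≤ M) :
    ∀ n : ℕ, ‖x ^ (n+1) - y ^ (n+1)‖ ≤ (n+1) * M ^ n * ‖x - y‖ := by
  have hM : 0 ≤ M := le_trans (norm_nonneg x) hx
  intro n
  induction n with
  | zero => simp
  | succ n ih =>
    have key : x ^ (n+2) - y ^ (n+2) = x ^ (n+1) * (x - y) + (x ^ (n+1) - y ^ (n+1)) * y := by
      noncomm_ring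
    have c1 : ‖x ^ (n+1)‖ ≤ M ^ (n+1) :=
      le_trans (norm_pow_le' x (Nat.succ_pos n)) (pow_le_pow_left₀ (norm_nonneg x) hx _)
    calc ‖x ^ (n+2) - y ^ (n+2)‖
        ≤ ‖x ^ (n+1) * (x - y)‖ + ‖(x ^ (n+1) - y ^ (n+1)) * y‖ := by
          rw [key]; exact norm_add_le _ _
      _ ≤ ‖x ^ (n+1)‖ * ‖x - y‖ + ‖x ^ (n+1) - y ^ (n+1)‖ * ‖y‖ :=
          add_le_add (norm_mul_le _ _) (norm_mul_le _ _)
      _ ≤ M ^ (n+1) * ‖x - y‖ + ((↑n+1) * M ^ n * ‖x - y‖) * M :=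
          add_le_add (mul_le_mul_of_nonneg_right c1 (norm_nonneg _))
            (mul_le_mul ih hy (norm_nonneg y) (by positivity))
      _ = (↑(n+1)+1) * M ^ (n+1) * ‖x - y‖ := by rw [pow_succ]; push_cast; ring

variable {𝔸 : Type*} [NormedRing 𝔸] [NormOneClass 𝔸] [NormedAlgebra ℂ 𝔸] [CompleteSpace 𝔸]

lemma coef_eq (n : ℕ) : ‖((Nat.factorial n : ℂ))⁻¹‖ = ((Nat.factorial n : ℝ))⁻¹ := by simp

lemma my_norm_exp_le (x : 𝔸) : ‖exp x‖ ≤ Real.exp ‖x‖ := by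
  have h1 : ∀ n : ℕ, ‖((Nat.factorial n : ℂ))⁻¹ • x ^ n‖ ≤ ‖x‖ ^ n / Nat.factorial n := by
    intro n
    rw [norm_smul, coef_eq, div_eq_inv_mul]
    exact mul_le_mul_of_nonneg_left (norm_pow_le _ _) (by positivity)
  calc ‖exp x‖ = ‖∑' n : ℕ, ((Nat.factorial n : ℂ))⁻¹ • x ^ n‖ := by rw [exp_eq_tsum ℂ]
    _ ≤ ∑' n : ℕ, ‖((Nat.factorial n : ℂ))⁻¹ • x ^ n‖ :=
        norm_tsum_le_tsum_norm (norm_expSeries_summable' x)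
    _ ≤ ∑' n : ℕ, ‖x‖ ^ n / Nat.factorial n :=
        Summable.tsum_le_tsum h1 (norm_expSeries_summable' x) (Real.summable_pow_div_factorial _)
    _ = Real.exp ‖x‖ := by rw [Real.exp_eq_exp_ℝ, exp_eq_tsum_div]

lemma my_norm_exp_sub_exp (x y : 𝔸) :
    ‖exp x - exp y‖ ≤ ‖x - y‖ * Real.exp (max ‖x‖ ‖y‖) := by
  set M : ℝ := max ‖x‖ ‖y‖ with hMdef
  have hx : ‖x‖ ≤ M := le_max_left _ _
  have hy : ‖y‖ ≤ M := le_max_right _ _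
  have hM : 0 ≤ M := le_trans (norm_nonneg x) hx
  set g : ℕ → ℝ := fun n => Nat.rec 0 (fun m _ => ‖x - y‖ * (M ^ m / Nat.factorial m)) n with hg
  have hg0 : g 0 = 0 := rfl
  have hgs : ∀ m : ℕ, g (m + 1) = ‖x - y‖ * (M ^ m / Nat.factorial m) := fun m => rfl
  have hgsum : Summable g := by
    rw [← summable_nat_add_iff 1]
    simpa [hgs] using ((Real.summable_pow_div_factorial M).mul_left ‖x - y‖)
  have hterm : ∀ n : ℕ, ‖((Nat.factorial n : ℂ))⁻¹ • (x ^ n - y ^ n)‖ ≤ g n := by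
    intro n
    match n with
    | 0 => simp [hg0]
    | (m+1) =>
      rw [norm_smul, coef_eq, hgs]
      have h2 := my_norm_pow_sub_pow hx hy m
      calc ((Nat.factorial (m+1) : ℝ))⁻¹ * ‖x ^ (m+1) - y ^ (m+1)‖
          ≤ ((Nat.factorial (m+1) : ℝ))⁻¹ * ((m+1) * M ^ m * ‖x - y‖) := by
            apply mul_le_mul_of_nonneg_left h2 (by positivity)
        _ = ‖x - y‖ * (M ^ m / Nat.factorial m) := by
            rw [Nat.factorial_succ]
            have h3 : ((Nat.factorial m : ℝ)) ≠ 0 := Nat.cast_ne_zero.mpr (Nat.factorial_ne_zero m)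
            push_cast
            field_simp
  have hsum1 : Summable fun n : ℕ => ((Nat.factorial n : ℂ))⁻¹ • x ^ n := expSeries_summable' x
  have hsum2 : Summable fun n : ℕ => ((Nat.factorial n : ℂ))⁻¹ • y ^ n := expSeries_summable' y
  have hdiff : exp x - exp y = ∑' n : ℕ, ((Nat.factorial n : ℂ))⁻¹ • (x ^ n - y ^ n) := by
    rw [exp_eq_tsum ℂ]
    beta_reduce
    rw [← Summable.tsum_sub hsum1 hsum2]
    simp [smul_sub]
  have hsumnorm : Summable fun n : ℕ => ‖((Nat.factorial n : ℂ))⁻¹ • (x ^ n - y ^ n)‖ :=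
    Summable.of_nonneg_of_le (fun n => norm_nonneg _) hterm hgsum
  calc ‖exp x - exp y‖ = ‖∑' n : ℕ, ((Nat.factorial n : ℂ))⁻¹ • (x ^ n - y ^ n)‖ := by
        rw [hdiff]
    _ ≤ ∑' n : ℕ, ‖((Nat.factorial n : ℂ))⁻¹ • (x ^ n - y ^ n)‖ :=
        norm_tsum_le_tsum_norm hsumnorm
    _ ≤ ∑' n : ℕ, g n := Summable.tsum_le_tsum hterm hsumnorm hgsum
    _ = ‖x - y‖ * Real.exp M := by
        rw [Summable.tsum_eq_zero_add hgsum, hg0, zero_add]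
        simp only [hgs]
        rw [tsum_mul_left, Real.exp_eq_exp_ℝ, exp_eq_tsum_div]

lemma my_exp_mul_exp_neg (y : 𝔸) : exp y * exp (-y) = 1 := by
  have hr : ∀ w : 𝔸, w ∈ Metric.eball (0 : 𝔸) (expSeries ℂ 𝔸).radius :=
    fun w => (expSeries_radius_eq_top ℂ 𝔸).symm ▸ edist_lt_top _ _
  rw [← exp_add_of_commute_of_mem_ball (𝕂 := ℂ) (Commute.neg_right (Commute.refl y)) (hr _) (hr _),
    add_neg_cancel, exp_zero]

lemma my_exp_conj (y z : 𝔸) :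
    exp y * exp z * exp (-y) = exp (exp y * z * exp (-y)) := by
  have h1 : exp y * exp (-y) = 1 := my_exp_mul_exp_neg y
  have h2 : exp (-y) * exp y = 1 := by
    have := my_exp_mul_exp_neg (-y); rwa [neg_neg] at this
  let U : 𝔸ˣ := ⟨exp y, exp (-y), h1, h2⟩
  have h3 : exp ((U : 𝔸) * z * ↑U⁻¹) = U * exp z * ↑U⁻¹ :=
    (map_exp_of_mem_ball (𝕂 := ℂ) (MulSemiringAction.toRingHom _ 𝔸 (ConjAct.toConjAct U))
      (continuous_const_smul (ConjAct.toConjAct U)) z ((expSeries_radius_eq_top ℂ 𝔸).symm ▸ edist_lt_top _ _)).symm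
  have hU : (U : 𝔸) = exp y := rfl
  have hUinv : ((U⁻¹ : 𝔸ˣ) : 𝔸) = exp (-y) := rfl
  rw [hU, hUinv] at h3
  exact h3.symm

lemma my_norm_prod_ofFn : ∀ (n : ℕ) (f : Fin n → 𝔸) (C : Fin n → ℝ),
    (∀ i, ‖f i‖ ≤ C i) → ‖(List.ofFn f).prod‖ ≤ ∏ i, C i := by
  intro n
  induction n with
  | zero => intro f C _; simp
  | succ n ih =>
    intro f C hf
    rw [List.ofFn_succ, List.prod_cons, Fin.prod_univ_succ]
    have h1 := ih (fun i => f i.succ) (fun i => C i.succ) (fun i => hf i.succ)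
    calc ‖f 0 * (List.ofFn fun i => f i.succ).prod‖
        ≤ ‖f 0‖ * ‖(List.ofFn fun i => f i.succ).prod‖ := norm_mul_le _ _
      _ ≤ C 0 * ∏ i : Fin n, C i.succ :=
          mul_le_mul (hf 0) h1 (norm_nonneg _) (le_trans (norm_nonneg _) (hf 0))

lemma my_telescope : ∀ (n : ℕ) (f g : Fin n → 𝔸) (C : Fin n → ℝ),
    (∀ i, 1 ≤ C i) → (∀ i, ‖f i‖ ≤ C i) → (∀ i, ‖g i‖ ≤ C i) →
    ‖(List.ofFn f).prod - (List.ofFn g).prod‖ ≤ (∏ i, C i) * ∑ i, ‖f i - g i‖ := by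
  intro n
  induction n with
  | zero => intro f g C _ _ _; simp
  | succ n ih =>
    intro f g C hC hf hg
    rw [List.ofFn_succ, List.ofFn_succ, List.prod_cons, List.prod_cons,
      Fin.prod_univ_succ, Fin.sum_univ_succ]
    set P : 𝔸 := (List.ofFn fun i => f i.succ).prod
    set Q : 𝔸 := (List.ofFn fun i => g i.succ).prod
    have hPQ : ‖P - Q‖ ≤ (∏ i : Fin n, C i.succ) * ∑ i : Fin n, ‖f i.succ - g i.succ‖ :=
      ih _ _ _ (fun i => hC i.succ) (fun i => hf i.succ) (fun i => hg i.succ)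
    have hQ : ‖Q‖ ≤ ∏ i : Fin n, C i.succ :=
      my_norm_prod_ofFn n _ _ (fun i => hg i.succ)
    have key : f 0 * P - g 0 * Q = f 0 * (P - Q) + (f 0 - g 0) * Q := by noncomm_ring
    have hCpos : (0:ℝ) ≤ ∏ i : Fin n, C i.succ :=
      Finset.prod_nonneg fun i _ => le_trans zero_le_one (hC i.succ)
    have hSnn : (0:ℝ) ≤ ∑ i : Fin n, ‖f i.succ - g i.succ‖ :=
      Finset.sum_nonneg fun i _ => norm_nonneg _
    calc ‖f 0 * P - g 0 * Q‖
        ≤ ‖f 0 * (P - Q)‖ + ‖(f 0 - g 0) * Q‖ := by rw [key]; exact norm_add_le _ _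
      _ ≤ ‖f 0‖ * ‖P - Q‖ + ‖f 0 - g 0‖ * ‖Q‖ :=
          add_le_add (norm_mul_le _ _) (norm_mul_le _ _)
      _ ≤ C 0 * ((∏ i : Fin n, C i.succ) * ∑ i : Fin n, ‖f i.succ - g i.succ‖)
          + ‖f 0 - g 0‖ * ∏ i : Fin n, C i.succ := by
          apply add_le_add
          · exact mul_le_mul (hf 0) hPQ (norm_nonneg _)
              (le_trans zero_le_one (hC 0))
          · exact mul_le_mul_of_nonneg_left hQ (norm_nonneg _)
      _ ≤ (C 0 * ∏ i : Fin n, C i.succ) * (‖f 0 - g 0‖ + ∑ i : Fin n, ‖f i.succ - g i.succ‖) := by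
          have h1 : (1:ℝ) ≤ C 0 := hC 0
          nlinarith [norm_nonneg (f 0 - g 0), hCpos, hSnn,
            mul_nonneg hCpos (norm_nonneg (f 0 - g 0))]

end Aux

/-! ### The main theorem -/

section Main

open NormedSpace
open scoped Matrix.Norms.L2Operator

local notation "Amod" => Matrix (Fin 2) (Fin 2) ℂ

instance : NormOneClass Amod := by
  constructor
  have h1 : ‖(1 : Amod)‖ = ‖Matrix.toEuclideanCLM (𝕜 := ℂ) (1 : Amod)‖ := rfl
  rw [h1, map_one]
  exact norm_one

lemma matrix_norm_le_half (M : Amod)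
    (h : ∀ v : EuclideanSpace ℂ (Fin 2),
      ‖(Matrix.toEuclideanCLM (𝕜 := ℂ) M) v‖ ≤ 1/2 * ‖v‖) : ‖M‖ ≤ 1/2 :=
  ContinuousLinearMap.opNorm_le_bound _ (by norm_num) h

lemma entry_apply (M : Amod) (v : EuclideanSpace ℂ (Fin 2)) (i : Fin 2) :
    (Matrix.toEuclideanCLM (𝕜 := ℂ) M) v i = M.mulVec v i := rfl

lemma norm_Ym : ‖Ym‖ ≤ 1/2 := by
  apply matrix_norm_le_half
  intro v
  rw [EuclideanSpace.norm_eq, EuclideanSpace.norm_eq]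
  have h0 : (Matrix.toEuclideanCLM (𝕜 := ℂ) Ym) v 0 = (1/2 : ℂ) * v 1 := by
    rw [entry_apply]; simp [Ym, Matrix.mulVec, dotProduct, Fin.sum_univ_two]
  have h1 : (Matrix.toEuclideanCLM (𝕜 := ℂ) Ym) v 1 = (1/2 : ℂ) * v 0 := by
    rw [entry_apply]; simp [Ym, Matrix.mulVec, dotProduct, Fin.sum_univ_two]
  rw [Fin.sum_univ_two, Fin.sum_univ_two, h0, h1, norm_mul, norm_mul]
  have hh : ‖(1/2 : ℂ)‖ = 1/2 := by norm_num
  rw [hh, show (1/2 * ‖v 1‖)^2 + (1/2 * ‖v 0‖)^2 = (1/2)^2 * (‖v 0‖^2 + ‖v 1‖^2) by ring,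
    Real.sqrt_mul (by positivity), Real.sqrt_sq (by norm_num)]

lemma norm_Xm : ‖Xm‖ ≤ 1/2 := by
  apply matrix_norm_le_half
  intro v
  rw [EuclideanSpace.norm_eq, EuclideanSpace.norm_eq]
  have h0 : (Matrix.toEuclideanCLM (𝕜 := ℂ) Xm) v 0 = (1/2 : ℂ) * v 0 := by
    rw [entry_apply]; simp [Xm, Matrix.mulVec, dotProduct, Fin.sum_univ_two]
  have h1 : (Matrix.toEuclideanCLM (𝕜 := ℂ) Xm) v 1 = -((1/2 : ℂ) * v 1) := by
    rw [entry_apply]; simp [Xm, Matrix.mulVec, dotProduct, Fin.sum_univ_two]; ring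
  rw [Fin.sum_univ_two, Fin.sum_univ_two, h0, h1, norm_neg, norm_mul, norm_mul]
  have hh : ‖(1/2 : ℂ)‖ = 1/2 := by norm_num
  rw [hh, show (1/2 * ‖v 0‖)^2 + (1/2 * ‖v 1‖)^2 = (1/2)^2 * (‖v 0‖^2 + ‖v 1‖^2) by ring,
    Real.sqrt_mul (by positivity), Real.sqrt_sq (by norm_num)]

lemma norm_expY_le (t : ℂ) : ‖exp (t • Ym)‖ ≤ Real.exp (‖t‖ / 2) := by
  refine le_trans (my_norm_exp_le _) (Real.exp_le_exp.mpr ?_)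
  rw [norm_smul]
  calc ‖t‖ * ‖Ym‖ ≤ ‖t‖ * (1/2) :=
        mul_le_mul_of_nonneg_left norm_Ym (norm_nonneg t)
    _ = ‖t‖ / 2 := by ring

lemma exp_half_le_two : Real.exp (1/2 : ℝ) ≤ 2 := by
  nlinarith [Real.exp_one_lt_d9, Real.add_one_le_exp (1/2 : ℝ),
    sq_nonneg (Real.exp (1/2) - 2), Real.exp_pos (1/2 : ℝ),
    Real.exp_add (1/2 : ℝ) (1/2), Real.exp_pos (1:ℝ)]

lemma stmt4_aux (n : ℕ) (a b a' b' : Fin n → ℂ) (A B ε : ℝ)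
    (hApos : 0 < A) (hBpos : 0 < B) (hεpos : 0 < ε)
    (hε : ε < min (1 / A) (1 / Real.exp 1))
    (hB : ∑ i, ‖a i‖ * Real.exp ‖b i‖ ≤ B)
    (hA : ∀ i, 2 * ‖a i‖ * Real.exp (‖b i‖ + 1) ≤ A)
    (hb : ∀ i, ‖b i - b' i‖ < ε)
    (ha : ∀ i, ‖a i - a' i‖ < ε * ‖a i‖) :
    opNorm ((List.ofFn fun i => Yt (b i) * Xt (a i) * Yt (-(b i))).prod -
            (List.ofFn fun i => Yt (b' i) * Xt (a' i) * Yt (-(b' i))).prod) ≤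
      12 * Real.exp (A + 2 * B) * B * ε := by
  -- switch from Complex.abs to norms
  -- basic epsilon facts
  have he2 : (2:ℝ) < Real.exp 1 := by
    have := Real.exp_one_gt_d9; linarith
  have hεhalf : ε ≤ 1/2 := by
    have h1 : ε < 1 / Real.exp 1 := lt_of_lt_of_le hε (min_le_right _ _)
    have h2 : 1 / Real.exp 1 < 1/2 := by
      rw [div_lt_div_iff₀ (Real.exp_pos 1) (by norm_num)]
      linarith
    linarith
  -- the conjugated generators
  set z : Fin n → Amod := fun i => exp ((b i) • Ym) * ((a i) • Xm) * exp (-((b i) • Ym))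
    with hzdef
  set z' : Fin n → Amod := fun i => exp ((b' i) • Ym) * ((a' i) • Xm) * exp (-((b' i) • Ym))
    with hz'def
  have hfactor : ∀ t u : ℂ, Yt t * Xt u * Yt (-t) = exp (exp (t • Ym) * (u • Xm) * exp (-(t • Ym))) := by
    intro t u
    have : (-t) • Ym = -(t • Ym) := by rw [neg_smul]
    rw [Yt, Yt, Xt, this]
    exact my_exp_conj (t • Ym) (u • Xm)
  -- basic numeric bounds
  have hra' : ∀ i, ‖a' i‖ ≤ (3/2) * ‖a i‖ := by
    intro i
    have h1 : ‖a' i‖ ≤ ‖a i‖ + ‖a i - a' i‖ := by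
      calc ‖a' i‖ = ‖a i - (a i - a' i)‖ := by rw [sub_sub_cancel]
        _ ≤ ‖a i‖ + ‖a i - a' i‖ := norm_sub_le _ _
    have h2 : ‖a i - a' i‖ ≤ ε * ‖a i‖ := (ha i).le
    have h3 : ε * ‖a i‖ ≤ (1/2) * ‖a i‖ :=
      mul_le_mul_of_nonneg_right hεhalf (norm_nonneg _)
    linarith
  have hsb' : ∀ i, ‖b' i‖ ≤ ‖b i‖ + 1/2 := by
    intro i
    have h1 : ‖b' i‖ ≤ ‖b i‖ + ‖b i - b' i‖ := by
      calc ‖b' i‖ = ‖b i - (b i - b' i)‖ := by rw [sub_sub_cancel]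
        _ ≤ ‖b i‖ + ‖b i - b' i‖ := norm_sub_le _ _
    have h2 := (hb i).le
    linarith
  -- exp(s'/2) ≤ 2 exp(s/2)
  have hE' : ∀ i, Real.exp (‖b' i‖ / 2) ≤ 2 * Real.exp (‖b i‖ / 2) := by
    intro i
    calc Real.exp (‖b' i‖ / 2) ≤ Real.exp ((‖b i‖ + 1/2) / 2) := by
          apply Real.exp_le_exp.mpr; linarith [hsb' i]
      _ = Real.exp (‖b i‖ / 2) * Real.exp (1/4 : ℝ) := by
          rw [← Real.exp_add]; ring_nf
      _ ≤ Real.exp (‖b i‖ / 2) * 2 := by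
          have h14 : Real.exp (1/4 : ℝ) ≤ Real.exp (1/2 : ℝ) := Real.exp_le_exp.mpr (by norm_num)
          have := exp_half_le_two
          exact mul_le_mul_of_nonneg_left (by linarith) (Real.exp_pos _).le
      _ = 2 * Real.exp (‖b i‖ / 2) := by ring
  have hEsq : ∀ i, Real.exp (‖b i‖ / 2) * Real.exp (‖b i‖ / 2) = Real.exp ‖b i‖ := by
    intro i; rw [← Real.exp_add]; ring_nf
  -- norm bounds for z and z'
  have hz : ∀ i, ‖z i‖ ≤ (1/2) * ‖a i‖ * Real.exp ‖b i‖ := by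
    intro i
    have h1 : ‖(a i) • Xm‖ ≤ ‖a i‖ * (1/2) := by
      rw [norm_smul]; exact mul_le_mul_of_nonneg_left norm_Xm (norm_nonneg _)
    calc ‖z i‖ ≤ ‖exp ((b i) • Ym)‖ * ‖(a i) • Xm‖ * ‖exp (-((b i) • Ym))‖ :=
          norm_mul₃_le
      _ ≤ Real.exp (‖b i‖/2) * (‖a i‖ * (1/2)) * Real.exp (‖b i‖/2) := by
          have e1 := norm_expY_le (b i)
          have e2 : ‖exp (-((b i) • Ym))‖ ≤ Real.exp (‖b i‖/2) := by
            have : -((b i) • Ym) = (-(b i)) • Ym := by rw [neg_smul]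
            rw [this]
            simpa using norm_expY_le (-(b i))
          have := Real.exp_pos (‖b i‖/2)
          apply mul_le_mul (mul_le_mul e1 h1 (norm_nonneg _) (Real.exp_pos _).le) e2
            (norm_nonneg _) (by positivity)
      _ = (1/2) * ‖a i‖ * Real.exp ‖b i‖ := by
          rw [show Real.exp (‖b i‖/2) * (‖a i‖ * (1/2)) * Real.exp (‖b i‖/2)
            = (Real.exp (‖b i‖/2) * Real.exp (‖b i‖/2)) * (‖a i‖ * (1/2)) by ring, hEsq i]
          ring
  have hz' : ∀ i, ‖z' i‖ ≤ (3/2) * ‖a i‖ * Real.exp ‖b i‖ := by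
    intro i
    have h1 : ‖(a' i) • Xm‖ ≤ ((3/2) * ‖a i‖) * (1/2) := by
      rw [norm_smul]
      exact mul_le_mul (hra' i) norm_Xm (by norm_num) (by positivity)
    have hb2 : Real.exp (‖b' i‖/2) * Real.exp (‖b' i‖/2) ≤ 2 * Real.exp ‖b i‖ := by
      calc Real.exp (‖b' i‖/2) * Real.exp (‖b' i‖/2) = Real.exp ‖b' i‖ := by
            rw [← Real.exp_add]; ring_nf
        _ ≤ Real.exp (‖b i‖ + 1/2) := Real.exp_le_exp.mpr (hsb' i)
        _ = Real.exp ‖b i‖ * Real.exp (1/2 : ℝ) := by rw [← Real.exp_add]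
        _ ≤ Real.exp ‖b i‖ * 2 :=
            mul_le_mul_of_nonneg_left exp_half_le_two (Real.exp_pos _).le
        _ = 2 * Real.exp ‖b i‖ := by ring
    calc ‖z' i‖ ≤ ‖exp ((b' i) • Ym)‖ * ‖(a' i) • Xm‖ * ‖exp (-((b' i) • Ym))‖ :=
          norm_mul₃_le
      _ ≤ Real.exp (‖b' i‖/2) * (((3/2) * ‖a i‖) * (1/2)) * Real.exp (‖b' i‖/2) := by
          have e1 := norm_expY_le (b' i)
          have e2 : ‖exp (-((b' i) • Ym))‖ ≤ Real.exp (‖b' i‖/2) := by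
            have : -((b' i) • Ym) = (-(b' i)) • Ym := by rw [neg_smul]
            rw [this]
            simpa using norm_expY_le (-(b' i))
          apply mul_le_mul (mul_le_mul e1 h1 (norm_nonneg _) (Real.exp_pos _).le) e2
            (norm_nonneg _) (by positivity)
      _ ≤ (3/2) * ‖a i‖ * Real.exp ‖b i‖ := by
          have h3 : Real.exp (‖b' i‖/2) * (((3/2) * ‖a i‖) * (1/2)) * Real.exp (‖b' i‖/2)
              = (Real.exp (‖b' i‖/2) * Real.exp (‖b' i‖/2)) * ((3/4) * ‖a i‖) := by ring
          rw [h3]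
          have h4 : (0:ℝ) ≤ (3/4) * ‖a i‖ := by positivity
          calc (Real.exp (‖b' i‖/2) * Real.exp (‖b' i‖/2)) * ((3/4) * ‖a i‖)
              ≤ (2 * Real.exp ‖b i‖) * ((3/4) * ‖a i‖) :=
                mul_le_mul_of_nonneg_right hb2 h4
            _ = (3/2) * ‖a i‖ * Real.exp ‖b i‖ := by ring
  -- bound on z i - z' i
  have hdz : ∀ i, ‖z i - z' i‖ ≤ 3 * ε * (‖a i‖ * Real.exp ‖b i‖) := by
    intro i
    set u : Amod := exp ((b i) • Ym)
    set u' : Amod := exp ((b' i) • Ym)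
    set w : Amod := exp (-((b i) • Ym))
    set w' : Amod := exp (-((b' i) • Ym))
    set p : Amod := (a i) • Xm
    set p' : Amod := (a' i) • Xm
    set E : ℝ := Real.exp (‖b i‖ / 2) with hEdef
    have hEpos : 0 < E := Real.exp_pos _
    have hzi : z i = u * p * w := rfl
    have hz'i : z' i = u' * p' * w' := rfl
    have key : z i - z' i = (u - u') * p * w + u' * (p - p') * w + u' * p' * (w - w') := by
      rw [hzi, hz'i]
      clear_value u u' w w' p p'
      noncomm_ring
    -- individual bounds
    have hu : ‖u‖ ≤ E := norm_expY_le (b i)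
    have hw : ‖w‖ ≤ E := by
      have : -((b i) • Ym) = (-(b i)) • Ym := by rw [neg_smul]
      rw [show w = exp ((-(b i)) • Ym) by rw [← this]]
      simpa using norm_expY_le (-(b i))
    have hu' : ‖u'‖ ≤ 2 * E := le_trans (norm_expY_le (b' i)) (hE' i)
    have hp : ‖p‖ ≤ ‖a i‖ * (1/2) := by
      rw [norm_smul]; exact mul_le_mul_of_nonneg_left norm_Xm (norm_nonneg _)
    have hp' : ‖p'‖ ≤ (3/4) * ‖a i‖ := by
      rw [norm_smul]
      calc ‖a' i‖ * ‖Xm‖ ≤ ((3/2) * ‖a i‖) * (1/2) :=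
            mul_le_mul (hra' i) norm_Xm (by norm_num) (by positivity)
        _ = (3/4) * ‖a i‖ := by ring
    have hpp' : ‖p - p'‖ ≤ ε * ‖a i‖ * (1/2) := by
      have : p - p' = (a i - a' i) • Xm := by rw [sub_smul]
      rw [this, norm_smul]
      calc ‖a i - a' i‖ * ‖Xm‖ ≤ (ε * ‖a i‖) * (1/2) :=
            mul_le_mul (ha i).le norm_Xm (by norm_num) (by positivity)
        _ = ε * ‖a i‖ * (1/2) := by ring
    -- exp difference bounds
    have hmaxb : max ‖(b i) • Ym‖ ‖(b' i) • Ym‖ ≤ ‖b i‖/2 + 1/4 := by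
      apply max_le
      · have : ‖(b i) • Ym‖ ≤ ‖b i‖ * (1/2) := by
          rw [norm_smul]; exact mul_le_mul_of_nonneg_left norm_Ym (norm_nonneg _)
        linarith [norm_nonneg (b i)]
      · have h1 : ‖(b' i) • Ym‖ ≤ ‖b' i‖ * (1/2) := by
          rw [norm_smul]; exact mul_le_mul_of_nonneg_left norm_Ym (norm_nonneg _)
        have h2 := hsb' i
        nlinarith [norm_nonneg (b' i)]
    have hexpmax : Real.exp (max ‖(b i) • Ym‖ ‖(b' i) • Ym‖) ≤ 2 * E := by
      calc Real.exp (max ‖(b i) • Ym‖ ‖(b' i) • Ym‖) ≤ Real.exp (‖b i‖/2 + 1/4) :=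
            Real.exp_le_exp.mpr hmaxb
        _ = E * Real.exp (1/4 : ℝ) := by rw [hEdef, ← Real.exp_add]
        _ ≤ E * 2 := by
            have h14 : Real.exp (1/4 : ℝ) ≤ Real.exp (1/2 : ℝ) :=
              Real.exp_le_exp.mpr (by norm_num)
            exact mul_le_mul_of_nonneg_left (le_trans h14 exp_half_le_two) hEpos.le
        _ = 2 * E := by ring
    have hbdiff : ‖(b i) • Ym - (b' i) • Ym‖ ≤ ε * (1/2) := by
      rw [← sub_smul, norm_smul]
      exact mul_le_mul (hb i).le norm_Ym (by norm_num) hεpos.le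
    have huu' : ‖u - u'‖ ≤ ε * E := by
      calc ‖u - u'‖ ≤ ‖(b i) • Ym - (b' i) • Ym‖ * Real.exp (max ‖(b i) • Ym‖ ‖(b' i) • Ym‖) :=
            my_norm_exp_sub_exp _ _
        _ ≤ (ε * (1/2)) * (2 * E) :=
            mul_le_mul hbdiff hexpmax (Real.exp_pos _).le (by positivity)
        _ = ε * E := by ring
    have hmaxbn : max ‖-((b i) • Ym)‖ ‖-((b' i) • Ym)‖ ≤ ‖b i‖/2 + 1/4 := by
      rw [norm_neg, norm_neg]; exact hmaxb
    have hww' : ‖w - w'‖ ≤ ε * E := by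
      calc ‖w - w'‖
          ≤ ‖-((b i) • Ym) - -((b' i) • Ym)‖ * Real.exp (max ‖-((b i) • Ym)‖ ‖-((b' i) • Ym)‖) :=
            my_norm_exp_sub_exp _ _
        _ ≤ (ε * (1/2)) * (2 * E) := by
            apply mul_le_mul _ _ (Real.exp_pos _).le (by positivity)
            · rw [show -((b i) • Ym) - -((b' i) • Ym) = -((b i) • Ym - (b' i) • Ym) by abel]
              rw [norm_neg]; exact hbdiff
            · calc Real.exp (max ‖-((b i) • Ym)‖ ‖-((b' i) • Ym)‖)
                  ≤ Real.exp (‖b i‖/2 + 1/4) := Real.exp_le_exp.mpr hmaxbn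
                _ = E * Real.exp (1/4 : ℝ) := by rw [hEdef, ← Real.exp_add]
                _ ≤ E * 2 := by
                    have h14 : Real.exp (1/4 : ℝ) ≤ Real.exp (1/2 : ℝ) :=
                      Real.exp_le_exp.mpr (by norm_num)
                    exact mul_le_mul_of_nonneg_left (le_trans h14 exp_half_le_two) hEpos.le
                _ = 2 * E := by ring
        _ = ε * E := by ring
    -- combine
    have t1 : ‖(u - u') * p * w‖ ≤ (ε * E) * (‖a i‖ * (1/2)) * E := by
      calc ‖(u - u') * p * w‖ ≤ ‖u - u'‖ * ‖p‖ * ‖w‖ := norm_mul₃_le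
        _ ≤ (ε * E) * (‖a i‖ * (1/2)) * E := by
            apply mul_le_mul (mul_le_mul huu' hp (norm_nonneg _) (by positivity)) hw
              (norm_nonneg _) (by positivity)
    have t2 : ‖u' * (p - p') * w‖ ≤ (2 * E) * (ε * ‖a i‖ * (1/2)) * E := by
      calc ‖u' * (p - p') * w‖ ≤ ‖u'‖ * ‖p - p'‖ * ‖w‖ := norm_mul₃_le
        _ ≤ (2 * E) * (ε * ‖a i‖ * (1/2)) * E := by
            apply mul_le_mul (mul_le_mul hu' hpp' (norm_nonneg _) (by positivity)) hw
              (norm_nonneg _) (by positivity)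
    have t3 : ‖u' * p' * (w - w')‖ ≤ (2 * E) * ((3/4) * ‖a i‖) * (ε * E) := by
      calc ‖u' * p' * (w - w')‖ ≤ ‖u'‖ * ‖p'‖ * ‖w - w'‖ := norm_mul₃_le
        _ ≤ (2 * E) * ((3/4) * ‖a i‖) * (ε * E) := by
            apply mul_le_mul (mul_le_mul hu' hp' (norm_nonneg _) (by positivity)) hww'
              (norm_nonneg _) (by positivity)
    have hE2 : E * E = Real.exp ‖b i‖ := hEsq i
    calc ‖z i - z' i‖
        ≤ ‖(u - u') * p * w‖ + ‖u' * (p - p') * w‖ + ‖u' * p' * (w - w')‖ := by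
          rw [key]
          exact le_trans (norm_add_le _ _) (by linarith [norm_add_le ((u - u') * p * w) (u' * (p - p') * w)])
      _ ≤ (ε * E) * (‖a i‖ * (1/2)) * E + (2 * E) * (ε * ‖a i‖ * (1/2)) * E
          + (2 * E) * ((3/4) * ‖a i‖) * (ε * E) := by linarith
      _ = 3 * ε * (‖a i‖ * (E * E)) := by ring
      _ = 3 * ε * (‖a i‖ * Real.exp ‖b i‖) := by rw [hE2]
  -- per-factor bound from hA
  have hAs : ∀ i, ‖a i‖ * Real.exp ‖b i‖ ≤ A / 4 := by
    intro i
    have h1 := hA i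
    have h2 : Real.exp (‖b i‖ + 1) = Real.exp ‖b i‖ * Real.exp 1 := by rw [← Real.exp_add]
    rw [h2] at h1
    nlinarith [Real.exp_pos ‖b i‖, mul_nonneg (norm_nonneg (a i)) (Real.exp_pos ‖b i‖).le]
  -- C i
  set C : Fin n → ℝ := fun i => Real.exp (2 * (‖a i‖ * Real.exp ‖b i‖)) with hCdef
  have hCone : ∀ i, 1 ≤ C i := by
    intro i
    apply Real.one_le_exp
    positivity
  set F : Fin n → Amod := fun i => Yt (b i) * Xt (a i) * Yt (-(b i)) with hFdef
  set G : Fin n → Amod := fun i => Yt (b' i) * Xt (a' i) * Yt (-(b' i)) with hGdef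
  have hFz : ∀ i, F i = exp (z i) := fun i => hfactor (b i) (a i)
  have hGz : ∀ i, G i = exp (z' i) := fun i => hfactor (b' i) (a' i)
  have hFC : ∀ i, ‖F i‖ ≤ C i := by
    intro i
    rw [hFz i]
    refine le_trans (my_norm_exp_le _) (Real.exp_le_exp.mpr ?_)
    have := hz i
    nlinarith [mul_nonneg (norm_nonneg (a i)) (Real.exp_pos ‖b i‖).le]
  have hGC : ∀ i, ‖G i‖ ≤ C i := by
    intro i
    rw [hGz i]
    refine le_trans (my_norm_exp_le _) (Real.exp_le_exp.mpr ?_)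
    have := hz' i
    nlinarith [mul_nonneg (norm_nonneg (a i)) (Real.exp_pos ‖b i‖).le]
  -- difference of factors
  have hFG : ∀ i, ‖F i - G i‖ ≤ Real.exp A * (3 * ε * (‖a i‖ * Real.exp ‖b i‖)) := by
    intro i
    rw [hFz i, hGz i]
    have hmax : max ‖z i‖ ‖z' i‖ ≤ A := by
      apply max_le
      · have := hz i
        have := hAs i
        nlinarith
      · have := hz' i
        have := hAs i
        nlinarith
    calc ‖exp (z i) - exp (z' i)‖ ≤ ‖z i - z' i‖ * Real.exp (max ‖z i‖ ‖z' i‖) :=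
          my_norm_exp_sub_exp _ _
      _ ≤ (3 * ε * (‖a i‖ * Real.exp ‖b i‖)) * Real.exp A := by
          apply mul_le_mul (hdz i) (Real.exp_le_exp.mpr hmax) (Real.exp_pos _).le
          positivity
      _ = Real.exp A * (3 * ε * (‖a i‖ * Real.exp ‖b i‖)) := by ring
  -- telescoping
  have tel := my_telescope n F G C hCone hFC hGC
  -- product bound
  have hprod : (∏ i, C i) ≤ Real.exp (2 * B) := by
    rw [hCdef, ← Real.exp_sum]
    apply Real.exp_le_exp.mpr
    rw [← Finset.mul_sum]
    nlinarith [hB]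
  -- sum bound
  have hsum : (∑ i, ‖F i - G i‖) ≤ Real.exp A * (3 * ε * B) := by
    calc (∑ i, ‖F i - G i‖) ≤ ∑ i, Real.exp A * (3 * ε * (‖a i‖ * Real.exp ‖b i‖)) :=
          Finset.sum_le_sum (fun i _ => hFG i)
      _ = Real.exp A * (3 * ε * ∑ i, ‖a i‖ * Real.exp ‖b i‖) := by
          rw [← Finset.mul_sum, ← Finset.mul_sum]
      _ ≤ Real.exp A * (3 * ε * B) := by
          apply mul_le_mul_of_nonneg_left _ (Real.exp_pos A).le
          apply mul_le_mul_of_nonneg_left hB (by positivity)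
  -- conclude
  have hgoal : opNorm ((List.ofFn F).prod - (List.ofFn G).prod)
      = ‖(List.ofFn F).prod - (List.ofFn G).prod‖ := rfl
  show opNorm ((List.ofFn F).prod - (List.ofFn G).prod) ≤ 12 * Real.exp (A + 2 * B) * B * ε
  rw [hgoal]
  have hprodnn : (0:ℝ) ≤ ∏ i, C i := Finset.prod_nonneg fun i _ => by positivity
  have hsumnn : (0:ℝ) ≤ ∑ i, ‖F i - G i‖ := Finset.sum_nonneg fun i _ => norm_nonneg _
  calc ‖(List.ofFn F).prod - (List.ofFn G).prod‖
      ≤ (∏ i, C i) * ∑ i, ‖F i - G i‖ := tel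
    _ ≤ Real.exp (2 * B) * (Real.exp A * (3 * ε * B)) := by
        apply mul_le_mul hprod hsum hsumnn (Real.exp_pos _).le
    _ = 3 * (Real.exp (2 * B) * Real.exp A) * B * ε := by ring
    _ = 3 * Real.exp (A + 2 * B) * B * ε := by rw [← Real.exp_add]; ring_nf
    _ ≤ 12 * Real.exp (A + 2 * B) * B * ε := by
        have : (0:ℝ) ≤ Real.exp (A + 2 * B) * B * ε := by positivity
        nlinarith [Real.exp_pos (A + 2 * B)]

end Main

theorem stmt4 (n : ℕ) (a b a' b' : Fin n → ℂ) (A B ε : ℝ)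
    (hApos : 0 < A) (hBpos : 0 < B) (hεpos : 0 < ε)
    (hε : ε < min (1 / A) (1 / Real.exp 1))
    (hB : ∑ i, ‖a i‖ * Real.exp ‖b i‖ ≤ B)
    (hA : ∀ i, 2 * ‖a i‖ * Real.exp (‖b i‖ + 1) ≤ A)
    (hb : ∀ i, ‖b i - b' i‖ < ε)
    (ha : ∀ i, ‖a i - a' i‖ < ε * ‖a i‖) :
    opNorm ((List.ofFn fun i => Yt (b i) * Xt (a i) * Yt (-(b i))).prod -
            (List.ofFn fun i => Yt (b' i) * Xt (a' i) * Yt (-(b' i))).prod) ≤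
      12 * Real.exp (A + 2 * B) * B * ε :=
  stmt4_aux n a b a' b' A B ε hApos hBpos hεpos hε hB hA hb ha

end
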